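/- arXiv:0905.1055 — 2 statements merged into one kernel-verified Lean document; each statement's English description precedes it below -/
import Mathlib

section
/- There exists a function g : ℝ → ℂ such that ∫_ℝ |s|^m |g(s)| ds < ∞ for every natural number m, and for all 0 < λ < μ one has λ/μ = ∫_ℝ g(s) λ^{is} μ^{-is} ds. -/
open MeasureTheory Complex

noncomputable section Stmt4Aux

/-- Smooth function equal to `exp t` for `t ≤ 0` and vanishing for `t ≥ 1`. -/
private def fAux : ℝ → ℂ := fun t => ((Real.exp t * Real.smoothTransition (1 - t) : ℝ) : ℂ)

private lemma fAux_contDiff : ContDiff ℝ (⊤ : ℕ∞) fAux := by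
  have h : ContDiff ℝ (⊤ : ℕ∞) fun t : ℝ => Real.exp t * Real.smoothTransition (1 - t) := by
    apply Real.contDiff_exp.mul
    have : ContDiff ℝ (⊤ : ℕ∞) fun t : ℝ => 1 - t := contDiff_const.sub contDiff_id
    exact Real.smoothTransition.contDiff.comp this
  exact Complex.ofRealCLM.contDiff.comp h

private lemma fAux_eq_exp {t : ℝ} (ht : t ≤ 0) : fAux t = Complex.exp t := by
  unfold fAux
  rw [Real.smoothTransition.one_of_one_le (by linarith), mul_one, Complex.ofReal_exp]

private lemma fAux_eq_zero {t : ℝ} (ht : 1 ≤ t) : fAux t = 0 := by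
  simp [fAux, Real.smoothTransition.zero_of_nonpos (by linarith : 1 - t ≤ 0)]

private lemma iteratedDeriv_cexp_real (n : ℕ) :
    iteratedDeriv n (fun t : ℝ => Complex.exp t) = fun t : ℝ => Complex.exp t := by
  induction n with
  | zero => simp
  | succ n ih =>
    rw [iteratedDeriv_succ, ih]
    funext t
    exact ((Complex.hasDerivAt_exp (t : ℂ)).comp_ofReal).deriv

private def fS : SchwartzMap ℝ ℂ where
  toFun := fAux
  smooth' := fAux_contDiff
  decay' := by
    intro k n
    obtain ⟨C1, hC1⟩ := (isCompact_Icc (a := (0 : ℝ)) (b := 2)).exists_bound_of_continuousOn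
      (f := fun x : ℝ => ‖x‖ ^ k * ‖iteratedFDeriv ℝ n fAux x‖)
      (((continuous_norm.pow k).mul
        ((fAux_contDiff.continuous_iteratedFDeriv (mod_cast le_top)).norm)).continuousOn)
    refine ⟨max C1 (k.factorial : ℝ), fun x => ?_⟩
    rcases lt_or_ge x 0 with hx | hx
    · have hEq : iteratedFDeriv ℝ n fAux x
          = iteratedFDeriv ℝ n (fun t : ℝ => Complex.exp t) x := by
        rw [← iteratedFDerivWithin_of_isOpen (f := fAux) n isOpen_Iio (Set.mem_Iio.2 hx),
          ← iteratedFDerivWithin_of_isOpen (f := fun t : ℝ => Complex.exp t) n isOpen_Iio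
            (Set.mem_Iio.2 hx)]
        exact iteratedFDerivWithin_congr
          (fun t ht => fAux_eq_exp (le_of_lt (Set.mem_Iio.1 ht))) (Set.mem_Iio.2 hx) n
      have hnorm : ‖iteratedFDeriv ℝ n fAux x‖ = Real.exp x := by
        rw [hEq, norm_iteratedFDeriv_eq_norm_iteratedDeriv, iteratedDeriv_cexp_real]
        simp [Complex.norm_exp]
      rw [hnorm]
      have h1 : ‖x‖ ^ k ≤ (k.factorial : ℝ) * Real.exp ‖x‖ := by
        have h := Real.pow_div_factorial_le_exp (x := ‖x‖) (norm_nonneg x) k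
        rw [div_le_iff₀ (by positivity)] at h
        linarith [h]
      have h2 : ‖x‖ ^ k * Real.exp x ≤ (k.factorial : ℝ) * (Real.exp ‖x‖ * Real.exp x) := by
        have := Real.exp_pos x
        nlinarith [pow_nonneg (norm_nonneg x) k]
      have h3 : Real.exp ‖x‖ * Real.exp x = 1 := by
        rw [← Real.exp_add, Real.norm_eq_abs, abs_of_nonpos hx.le]
        simp
      rw [h3, mul_one] at h2
      exact h2.trans (le_max_right _ _)
    · rcases le_or_gt x 2 with hx2 | hx2
      · refine le_trans ?_ (le_max_left _ (k.factorial : ℝ))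
        exact le_trans (le_abs_self _) (hC1 x ⟨hx, hx2⟩)
      · have hEq : iteratedFDeriv ℝ n fAux x = 0 := by
          have hx1 : x ∈ Set.Ioi (1 : ℝ) := by simp only [Set.mem_Ioi]; linarith
          rw [← iteratedFDerivWithin_of_isOpen (f := fAux) n isOpen_Ioi hx1,
            iteratedFDerivWithin_congr
              (fun t ht => fAux_eq_zero (le_of_lt (Set.mem_Ioi.1 ht))) hx1 n,
            iteratedFDerivWithin_of_isOpen (f := fun _ : ℝ => (0 : ℂ)) n isOpen_Ioi hx1,
            iteratedFDeriv_zero_fun]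
          rfl
        rw [hEq]
        simp only [norm_zero, mul_zero]
        exact le_trans (by positivity) (le_max_right C1 (k.factorial : ℝ))

open FourierTransform in
private def GS : SchwartzMap ℝ ℂ := SchwartzMap.fourierTransformCLM ℂ fS

end Stmt4Aux

open FourierTransform

theorem stmt4 :
    ∃ g : ℝ → ℂ,
      (∀ m : ℕ, Integrable (fun s : ℝ => |s| ^ m * ‖g s‖)) ∧
      (∀ l m : ℝ, 0 < l → l < m →
      ((l / m : ℝ) : ℂ) = ∫ s : ℝ, g s * Complex.exp (Complex.I * s * Real.log l) *
        Complex.exp (-(Complex.I * s * Real.log m))) := by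
  set π := Real.pi
  have hπ : (0 : ℝ) < 2 * π := by positivity
  refine ⟨fun s => (2 * π)⁻¹ • GS (s / (2 * π)), ?_, ?_⟩
  · intro m
    have hG := GS.integrable_pow_mul (volume : Measure ℝ) m
    have h2 := hG.comp_div hπ.ne'
    have heq : (fun s : ℝ => |s| ^ m *
          ‖(2 * π)⁻¹ • GS (s / (2 * π))‖)
        = fun s : ℝ => ((2 * π) ^ m * (2 * π)⁻¹) *
          (‖s / (2 * π)‖ ^ m * ‖GS (s / (2 * π))‖) := by
      funext s
      have : ‖(2 * π)⁻¹ • GS (s / (2 * π))‖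
          = (2 * π)⁻¹ * ‖GS (s / (2 * π))‖ := by
        rw [norm_smul, Real.norm_eq_abs, abs_of_pos (by positivity)]
      rw [this]
      rw [Real.norm_eq_abs, abs_div, abs_of_pos hπ, div_pow]
      field_simp
    rw [heq]
    exact h2.const_mul _
  · intro l m hl hlm
    have hm : 0 < m := hl.trans hlm
    set t : ℝ := Real.log l - Real.log m with ht_def
    have ht : t < 0 := sub_neg.2 (Real.log_lt_log hl hlm)
    set Φ : ℝ → ℂ := fun ξ => Complex.exp ((2 * π * (ξ * t) : ℝ) * Complex.I) • (𝓕 fAux) ξ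
      with hΦ_def
    have hstep1 : ∀ s : ℝ,
        ((2 * π)⁻¹ • GS (s / (2 * π))) * Complex.exp (Complex.I * s * Real.log l) *
          Complex.exp (-(Complex.I * s * Real.log m)) = (2 * π)⁻¹ • Φ (s / (2 * π)) := by
      intro s
      have hG : GS (s / (2 * π)) = (𝓕 fAux) (s / (2 * π)) := rfl
      have harg : Complex.exp (Complex.I * s * Real.log l) *
            Complex.exp (-(Complex.I * s * Real.log m))
          = Complex.exp (((2 * π * (s / (2 * π) * t) : ℝ) : ℂ) * Complex.I) := by
        rw [← Complex.exp_add]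
        congr 1
        have hs : 2 * π * (s / (2 * π) * t) = s * t := by
          field_simp [show π ≠ 0 from Real.pi_ne_zero]
        rw [hs, ht_def]
        push_cast
        ring
      rw [hΦ_def]
      simp only [hG, smul_eq_mul]
      rw [mul_assoc, harg, smul_mul_assoc, mul_comm _ (Complex.exp _)]
    have hstep2 : (∫ s : ℝ, (2 * π)⁻¹ • Φ (s / (2 * π))) = ∫ ξ : ℝ, Φ ξ := by
      rw [integral_smul, Measure.integral_comp_div Φ (2 * π), abs_of_pos hπ, smul_smul,
        inv_mul_cancel₀ hπ.ne', one_smul]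
    have hstep3 : (∫ ξ : ℝ, Φ ξ) = 𝓕⁻ (𝓕 fAux) t := by
      rw [Real.fourierInv_eq']
      apply integral_congr_ae
      filter_upwards with ξ
      rw [hΦ_def]
      norm_num [RCLike.inner_apply, conj_trivial]
      exact Or.inl (congrArg (fun z => Complex.exp (2 * (Real.pi : ℂ) * z * I)) (mul_comm (ξ : ℂ) (t : ℂ)))
    have hinv : 𝓕⁻ (𝓕 fAux) t = fAux t := by
      have := Continuous.fourierInv_fourier_eq (f := fAux) fAux_contDiff.continuous
        fS.integrable GS.integrable
      rw [this]
    calc ((l / m : ℝ) : ℂ)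
        = fAux t := by
          rw [fAux_eq_exp ht.le, ht_def, ← Complex.ofReal_exp, Real.exp_sub,
            Real.exp_log hl, Real.exp_log hm]
      _ = ∫ ξ : ℝ, Φ ξ := by rw [hstep3, hinv]
      _ = ∫ s : ℝ, (2 * π)⁻¹ • Φ (s / (2 * π)) := hstep2.symm
      _ = _ := by
          simp only [hstep1]
end

section
/- Let f : ℝ → ℝ and 1 < p < ∞. Suppose there is C_p such that for every n, every increasing sequence λ_1 < ⋯ < λ_n, the Schur multiplier with symbol φ(k,l) = (f(λ_k)-f(λ_l))/(λ_k - λ_l)·1_{k≠l} has norm at most C_p on S^p_n. Then for any two self-adjoint n×n complex matrices A, B: ‖f(A) - f(B)‖_p ≤ C_p ‖A - B‖_p, where f(A) is defined by the functional calculus (applying f to the eigenvalues of A). -/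
open MeasureTheory Complex Matrix

noncomputable def schattenNorm {n : ℕ} (p : ℝ) (A : Matrix (Fin n) (Fin n) ℂ) : ℝ :=
  (∑ i, Real.sqrt ((Matrix.isHermitian_conjTranspose_mul_self A).eigenvalues i) ^ p) ^ (1 / p)

def schurMul {n : ℕ} (φ : Fin n → Fin n → ℂ) (a : Matrix (Fin n) (Fin n) ℂ) :
    Matrix (Fin n) (Fin n) ℂ := Matrix.of fun k l => φ k l * a k l

noncomputable def schurOpNorm {n : ℕ} (p : ℝ) (φ : Fin n → Fin n → ℂ) : ℝ :=
  sInf {C : ℝ | 0 ≤ C ∧ ∀ a, schattenNorm p (schurMul φ a) ≤ C * schattenNorm p a}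

noncomputable def matFun {n : ℕ} (f : ℝ → ℝ) (A : Matrix (Fin n) (Fin n) ℂ)
    (hA : A.IsHermitian) : Matrix (Fin n) (Fin n) ℂ :=
  (hA.eigenvectorUnitary : Matrix (Fin n) (Fin n) ℂ) *
    Matrix.diagonal (fun i => (f (hA.eigenvalues i) : ℂ)) *
    ((hA.eigenvectorUnitary : Matrix (Fin n) (Fin n) ℂ))ᴴ

section Helpers

variable {p : ℝ}

lemma exists_poly_near (hp2 : 0 < p / 2) (R : ℝ) {ε : ℝ} (hε : 0 < ε) :
    ∃ q : Polynomial ℝ, ∀ x ∈ Set.Icc (0:ℝ) R, |q.eval x - x ^ (p/2)| ≤ ε := by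
  obtain ⟨q, hq⟩ := exists_polynomial_near_of_continuousOn 0 R (fun x => x ^ (p/2))
    (fun x _ => (Real.continuousAt_rpow_const x (p/2) (Or.inr hp2.le)).continuousWithinAt) ε hε
  exact ⟨q, fun x hx => (hq x hx).le⟩

lemma sum_eval_eq (q : Polynomial ℝ) {K : ℕ} (g : Fin K → ℝ) :
    ∑ i, q.eval (g i) =
      ∑ j ∈ Finset.range (q.natDegree + 1), q.coeff j * ∑ i, (g i) ^ j := by
  have h : ∀ i : Fin K, q.eval (g i)
      = ∑ j ∈ Finset.range (q.natDegree + 1), q.coeff j * (g i) ^ j := by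
    intro i; exact Polynomial.eval_eq_sum_range _
  simp_rw [h]
  rw [Finset.sum_comm]
  simp_rw [Finset.mul_sum]

lemma powsum_eq (hp : 1 < p) {N M : ℕ} (e : Fin N → ℝ) (r : Fin M → ℝ)
    (he : ∀ i, 0 ≤ e i) (hr : ∀ i, 0 ≤ r i)
    (hps : ∀ k : ℕ, 1 ≤ k → ∑ i, e i ^ k = ∑ i, r i ^ k) :
    ∑ i, e i ^ (p/2) = ∑ i, r i ^ (p/2) := by
  have hp2 : 0 < p / 2 := by linarith
  have key : ∀ ε : ℝ, 0 < ε → |∑ i, e i ^ (p/2) - ∑ i, r i ^ (p/2)| ≤ 0 + ε := by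
    intro ε hε
    rw [zero_add]
    set R : ℝ := ∑ i, e i with hRdef
    have hR0 : 0 ≤ R := Finset.sum_nonneg fun i _ => he i
    have hRr : ∑ i, r i = R := by
      have h1 := hps 1 le_rfl
      simpa using h1.symm
    have heR : ∀ i, e i ∈ Set.Icc (0:ℝ) R := fun i =>
      ⟨he i, Finset.single_le_sum (fun j _ => he j) (Finset.mem_univ i)⟩
    have hrR : ∀ i, r i ∈ Set.Icc (0:ℝ) R := fun i =>
      ⟨hr i, hRr ▸ Finset.single_le_sum (fun j _ => hr j) (Finset.mem_univ i)⟩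
    set ε' : ℝ := ε / (2*N + 2*M + 1) with hε'def
    have hε' : 0 < ε' := by positivity
    obtain ⟨q, hq⟩ := exists_poly_near hp2 R hε'
    have h1 : |∑ i, e i ^ (p/2) - ∑ i, q.eval (e i)| ≤ N * ε' := by
      rw [← Finset.sum_sub_distrib]
      calc |∑ i, (e i ^ (p/2) - q.eval (e i))| ≤ ∑ i, |e i ^ (p/2) - q.eval (e i)| :=
            Finset.abs_sum_le_sum_abs _ _
        _ ≤ ∑ _i : Fin N, ε' := Finset.sum_le_sum fun i _ => by
            rw [abs_sub_comm]; exact hq _ (heR i)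
        _ = N * ε' := by simp [mul_comm]
    have h3 : |∑ i, q.eval (r i) - ∑ i, r i ^ (p/2)| ≤ M * ε' := by
      rw [← Finset.sum_sub_distrib]
      calc |∑ i, (q.eval (r i) - r i ^ (p/2))| ≤ ∑ i, |q.eval (r i) - r i ^ (p/2)| :=
            Finset.abs_sum_le_sum_abs _ _
        _ ≤ ∑ _i : Fin M, ε' := Finset.sum_le_sum fun i _ => hq _ (hrR i)
        _ = M * ε' := by simp [mul_comm]
    have hc0 : |q.coeff 0| ≤ ε' := by
      have h00 := hq 0 ⟨le_rfl, hR0⟩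
      rw [Real.zero_rpow (ne_of_gt hp2), sub_zero] at h00
      rw [Polynomial.coeff_zero_eq_eval_zero]
      exact h00
    have hmid : ∑ i, q.eval (e i) - ∑ i, q.eval (r i) = q.coeff 0 * ((N:ℝ) - M) := by
      rw [sum_eval_eq, sum_eval_eq, ← Finset.sum_sub_distrib]
      rw [Finset.sum_eq_single 0]
      · simp [mul_sub]
      · intro j _ hj0
        rw [hps j (Nat.one_le_iff_ne_zero.mpr hj0)]; ring
      · intro h0
        exact absurd (Finset.mem_range.mpr (Nat.succ_pos _)) h0
    have h2 : |∑ i, q.eval (e i) - ∑ i, q.eval (r i)| ≤ ((N:ℝ) + M) * ε' := by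
      rw [hmid, abs_mul]
      have hN0 : (0:ℝ) ≤ N := Nat.cast_nonneg N
      have hM0 : (0:ℝ) ≤ M := Nat.cast_nonneg M
      have hNM : |((N:ℝ) - M)| ≤ (N:ℝ) + M := by
        rw [abs_sub_le_iff]; constructor <;> linarith
      have hmm := mul_le_mul hc0 hNM (abs_nonneg _) hε'.le
      linarith
    calc |∑ i, e i ^ (p/2) - ∑ i, r i ^ (p/2)|
        ≤ |∑ i, e i ^ (p/2) - ∑ i, q.eval (e i)| + |∑ i, q.eval (e i) - ∑ i, r i ^ (p/2)| :=
          abs_sub_le _ _ _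
      _ ≤ |∑ i, e i ^ (p/2) - ∑ i, q.eval (e i)| + (|∑ i, q.eval (e i) - ∑ i, q.eval (r i)|
          + |∑ i, q.eval (r i) - ∑ i, r i ^ (p/2)|) := by
          gcongr
          exact abs_sub_le _ _ _
      _ ≤ N * ε' + (((N:ℝ) + M) * ε' + M * ε') := by gcongr
      _ = (2*(N:ℝ) + 2*(M:ℝ)) * ε' := by ring
      _ ≤ ε := by
          have h21 : (0:ℝ) < 2*(N:ℝ) + 2*(M:ℝ) + 1 := by positivity
          have hfe : (2*(N:ℝ) + 2*(M:ℝ) + 1) * ε' = ε := by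
            rw [hε'def]; field_simp
          nlinarith [hε'.le]
  have h0 := le_of_forall_pos_le_add key
  exact sub_eq_zero.mp (abs_eq_zero.mp (le_antisymm h0 (abs_nonneg _)))

end Helpers
section H2
variable {p : ℝ}
open Filter

lemma powsum_tendsto (hp : 1 < p) {N : ℕ} (e : ℕ → Fin N → ℝ) (e0 : Fin N → ℝ)
    (he : ∀ j i, 0 ≤ e j i) (he0 : ∀ i, 0 ≤ e0 i)
    (hk : ∀ k : ℕ, 1 ≤ k →
      Tendsto (fun j => ∑ i, e j i ^ k) atTop (nhds (∑ i, e0 i ^ k))) :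
    Tendsto (fun j => ∑ i, (e j i) ^ (p/2)) atTop (nhds (∑ i, e0 i ^ (p/2))) := by
  have hp2 : 0 < p / 2 := by linarith
  rw [Metric.tendsto_atTop]
  intro ε hε
  set R : ℝ := (∑ i, e0 i) + 1 with hRdef
  have hR0 : 0 ≤ R := by
    have : 0 ≤ ∑ i, e0 i := Finset.sum_nonneg fun i _ => he0 i
    linarith
  have he0R : ∀ i, e0 i ∈ Set.Icc (0:ℝ) R := fun i =>
    ⟨he0 i, by
      have := Finset.single_le_sum (fun j _ => he0 j) (Finset.mem_univ i)
      linarith⟩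
  set ε' : ℝ := ε / (2*N + 2) with hε'def
  have hε' : 0 < ε' := by positivity
  obtain ⟨q, hq⟩ := exists_poly_near hp2 R hε'
  -- eventually ∑ e j < R
  have h1 := hk 1 le_rfl
  simp only [pow_one] at h1
  have hev1 : ∀ᶠ j in atTop, ∑ i, e j i < R :=
    h1.eventually_lt_const (by rw [hRdef]; linarith)
  -- convergence of polynomial sums
  have hk' : ∀ k : ℕ, Tendsto (fun j => ∑ i, e j i ^ k) atTop (nhds (∑ i, e0 i ^ k)) := by
    intro k
    rcases Nat.eq_zero_or_pos k with hk0 | hk1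
    · subst hk0; simp
    · exact hk k hk1
  have hqconv : Tendsto (fun j => ∑ i, q.eval (e j i)) atTop (nhds (∑ i, q.eval (e0 i))) := by
    simp_rw [sum_eval_eq]
    exact tendsto_finset_sum _ fun j _ => (hk' j).const_mul _
  have hev2 : ∀ᶠ j in atTop,
      |∑ i, q.eval (e j i) - ∑ i, q.eval (e0 i)| < ε' := by
    have := Metric.tendsto_atTop.mp hqconv
    obtain ⟨J, hJ⟩ := this ε' hε'
    exact eventually_atTop.mpr ⟨J, fun j hj => by
      have := hJ j hj; rwa [Real.dist_eq] at this⟩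
  obtain ⟨J, hJ⟩ := eventually_atTop.mp (hev1.and hev2)
  refine ⟨J, fun j hj => ?_⟩
  obtain ⟨hjR, hjq⟩ := hJ j hj
  have hejR : ∀ i, e j i ∈ Set.Icc (0:ℝ) R := fun i =>
    ⟨he j i, by
      have := Finset.single_le_sum (fun l _ => he j l) (Finset.mem_univ i)
      linarith⟩
  rw [Real.dist_eq]
  have ha : |∑ i, (e j i) ^ (p/2) - ∑ i, q.eval (e j i)| ≤ N * ε' := by
    rw [← Finset.sum_sub_distrib]
    calc |∑ i, ((e j i) ^ (p/2) - q.eval (e j i))|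
        ≤ ∑ i, |(e j i) ^ (p/2) - q.eval (e j i)| := Finset.abs_sum_le_sum_abs _ _
      _ ≤ ∑ _i : Fin N, ε' := Finset.sum_le_sum fun i _ => by
          rw [abs_sub_comm]; exact hq _ (hejR i)
      _ = N * ε' := by simp [mul_comm]
  have hb : |∑ i, q.eval (e0 i) - ∑ i, (e0 i) ^ (p/2)| ≤ N * ε' := by
    rw [← Finset.sum_sub_distrib]
    calc |∑ i, (q.eval (e0 i) - (e0 i) ^ (p/2))|
        ≤ ∑ i, |q.eval (e0 i) - (e0 i) ^ (p/2)| := Finset.abs_sum_le_sum_abs _ _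
      _ ≤ ∑ _i : Fin N, ε' := Finset.sum_le_sum fun i _ => hq _ (he0R i)
      _ = N * ε' := by simp [mul_comm]
  have tri : |∑ i, (e j i) ^ (p/2) - ∑ i, (e0 i) ^ (p/2)|
      ≤ N * ε' + (ε' + N * ε') := by
    calc |∑ i, (e j i) ^ (p/2) - ∑ i, (e0 i) ^ (p/2)|
        ≤ |∑ i, (e j i) ^ (p/2) - ∑ i, q.eval (e j i)|
          + |∑ i, q.eval (e j i) - ∑ i, (e0 i) ^ (p/2)| := abs_sub_le _ _ _
      _ ≤ |∑ i, (e j i) ^ (p/2) - ∑ i, q.eval (e j i)|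
          + (|∑ i, q.eval (e j i) - ∑ i, q.eval (e0 i)|
            + |∑ i, q.eval (e0 i) - ∑ i, (e0 i) ^ (p/2)|) := by
          gcongr
          exact abs_sub_le _ _ _
      _ ≤ N * ε' + (ε' + N * ε') := by gcongr
  have hfe : (2*(N:ℝ) + 2) * ε' = ε := by rw [hε'def]; field_simp
  have hN0 : (0:ℝ) ≤ N := Nat.cast_nonneg N
  nlinarith [hε'.le]

lemma conjPow {n m : ℕ} (W : Matrix (Fin m) (Fin n) ℂ) (hW : Wᴴ * W = 1)
    (K : Matrix (Fin n) (Fin n) ℂ) {k : ℕ} (hk : 1 ≤ k) :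
    (W * K * Wᴴ) ^ k = W * K ^ k * Wᴴ := by
  induction k, hk using Nat.le_induction with
  | base => simp [pow_one]
  | succ k hk ih =>
    rw [pow_succ, ih, pow_succ]
    have hcan : Wᴴ * (W * (K * Wᴴ)) = K * Wᴴ := by
      rw [← Matrix.mul_assoc, hW, Matrix.one_mul]
    calc W * K ^ k * Wᴴ * (W * K * Wᴴ)
        = W * (K ^ k * (Wᴴ * (W * (K * Wᴴ)))) := by simp only [Matrix.mul_assoc]
      _ = W * (K ^ k * (K * Wᴴ)) := by rw [hcan]
      _ = W * (K ^ k * K) * Wᴴ := by simp only [Matrix.mul_assoc]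

lemma sum_eig_pow {N : ℕ} (H : Matrix (Fin N) (Fin N) ℂ) (hH : H.IsHermitian) {k : ℕ}
    (hk : 1 ≤ k) : ∑ i, hH.eigenvalues i ^ k = ((H ^ k).trace).re := by
  set U : Matrix (Fin N) (Fin N) ℂ := (hH.eigenvectorUnitary : Matrix (Fin N) (Fin N) ℂ) with hUdef
  have hU : Uᴴ * U = 1 := by
    rw [← Matrix.star_eq_conjTranspose]
    exact Matrix.mem_unitaryGroup_iff'.mp hH.eigenvectorUnitary.2
  have hsp : H = U * Matrix.diagonal (fun i => (hH.eigenvalues i : ℂ)) * Uᴴ := by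
    have := hH.spectral_theorem
    rw [← Matrix.star_eq_conjTranspose]
    exact this
  conv_rhs => rw [hsp]
  rw [conjPow U hU _ hk, Matrix.trace_mul_cycle, hU, one_mul, Matrix.diagonal_pow,
    Matrix.trace_diagonal]
  rw [Complex.re_sum]
  simp [Pi.pow_apply, ← Complex.ofReal_pow]

end H2
section H3
variable {p : ℝ}

lemma schattenNorm_eq_rpow (hp : 1 < p) {n : ℕ} (X : Matrix (Fin n) (Fin n) ℂ) :
    schattenNorm p X
      = (∑ i, ((Matrix.isHermitian_conjTranspose_mul_self X).eigenvalues i) ^ (p/2)) ^ (1/p) := by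
  unfold schattenNorm
  congr 1
  refine Finset.sum_congr rfl fun i _ => ?_
  have hnn := Matrix.eigenvalues_conjTranspose_mul_self_nonneg X i
  rw [Real.sqrt_eq_rpow, ← Real.rpow_mul hnn]
  congr 1
  ring

lemma schattenNorm_eq_of_powsum (hp : 1 < p) {n m : ℕ} (X : Matrix (Fin n) (Fin n) ℂ)
    (r : Fin m → ℝ) (hr : ∀ i, 0 ≤ r i)
    (h : ∀ k : ℕ, 1 ≤ k → (((Xᴴ * X) ^ k).trace).re = ∑ i, r i ^ k) :
    schattenNorm p X = (∑ i, r i ^ (p/2)) ^ (1/p) := by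
  rw [schattenNorm_eq_rpow hp]
  congr 1
  refine powsum_eq hp _ r (fun i => Matrix.eigenvalues_conjTranspose_mul_self_nonneg X i) hr
    fun k hk => ?_
  rw [sum_eig_pow _ _ hk, h k hk]

lemma schattenNorm_nonneg {n : ℕ} (X : Matrix (Fin n) (Fin n) ℂ) :
    0 ≤ schattenNorm p X :=
  Real.rpow_nonneg (Finset.sum_nonneg fun i _ => Real.rpow_nonneg (Real.sqrt_nonneg _) _) _

lemma schattenNorm_isometry_conj (hp : 1 < p) {n m : ℕ} (W₁ W₂ : Matrix (Fin m) (Fin n) ℂ)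
    (h₁ : W₁ᴴ * W₁ = 1) (h₂ : W₂ᴴ * W₂ = 1) (X : Matrix (Fin n) (Fin n) ℂ) :
    schattenNorm p (W₁ * X * W₂ᴴ) = schattenNorm p X := by
  rw [schattenNorm_eq_of_powsum hp (W₁ * X * W₂ᴴ)
    (fun i => (Matrix.isHermitian_conjTranspose_mul_self X).eigenvalues i)
    (fun i => Matrix.eigenvalues_conjTranspose_mul_self_nonneg X i) ?_,
    ← schattenNorm_eq_rpow hp]
  intro k hk
  have hYY : (W₁ * X * W₂ᴴ)ᴴ * (W₁ * X * W₂ᴴ) = W₂ * (Xᴴ * X) * W₂ᴴ := by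
    have hcan : W₁ᴴ * (W₁ * (X * W₂ᴴ)) = X * W₂ᴴ := by
      rw [← Matrix.mul_assoc, h₁, Matrix.one_mul]
    simp only [Matrix.conjTranspose_mul, Matrix.conjTranspose_conjTranspose, Matrix.mul_assoc]
    rw [hcan]
  rw [hYY, conjPow W₂ h₂ _ hk, Matrix.trace_mul_cycle, h₂, Matrix.one_mul,
    ← sum_eig_pow _ (Matrix.isHermitian_conjTranspose_mul_self X) hk]

lemma stdBasis_pow {N : ℕ} (i : Fin N) (z : ℂ) {k : ℕ} (hk : 1 ≤ k) :
    (Matrix.single i i z) ^ k = Matrix.single i i (z ^ k) := by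
  induction k, hk using Nat.le_induction with
  | base => simp
  | succ k hk ih =>
    rw [pow_succ, ih, Matrix.single_mul_single_same, pow_succ]

lemma schattenNorm_single (hp : 1 < p) (c : ℂ) :
    schattenNorm p (Matrix.single (0 : Fin 2) (1 : Fin 2) c) = ‖c‖ := by
  have hp0 : (p : ℝ) ≠ 0 := by positivity
  have habs : (0:ℝ) ≤ ‖c‖ := norm_nonneg _
  have hconj : (Matrix.single (0 : Fin 2) (1 : Fin 2) c)ᴴ
      = Matrix.single (1 : Fin 2) (0 : Fin 2) (starRingEnd ℂ c) := by
    ext a b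
    simp [Matrix.single, Matrix.conjTranspose_apply, and_comm]
    aesop
  have hmul : (Matrix.single (0 : Fin 2) (1 : Fin 2) c)ᴴ
        * (Matrix.single (0 : Fin 2) (1 : Fin 2) c)
      = Matrix.single (1 : Fin 2) (1 : Fin 2) ((‖c‖ ^ 2 : ℝ) : ℂ) := by
    rw [hconj, Matrix.single_mul_single_same, Complex.sq_norm]
    exact congrArg _ Complex.normSq_eq_conj_mul_self.symm
  have hps : ∀ k : ℕ, 1 ≤ k →
      ((((Matrix.single (0 : Fin 2) (1 : Fin 2) c)ᴴ
        * (Matrix.single (0 : Fin 2) (1 : Fin 2) c)) ^ k).trace).re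
      = ∑ _i : Fin 1, (‖c‖ ^ 2) ^ k := by
    intro k hk
    rw [hmul, stdBasis_pow _ _ hk]
    have htr : (Matrix.single (1 : Fin 2) (1 : Fin 2)
        (((‖c‖ ^ 2 : ℝ) : ℂ) ^ k)).trace = ((‖c‖ ^ 2 : ℝ) : ℂ) ^ k := by
      simp [Matrix.trace, Matrix.diag, Matrix.single]
    rw [htr, ← Complex.ofReal_pow, Complex.ofReal_re]
    simp
  rw [schattenNorm_eq_of_powsum hp _ (fun _ : Fin 1 => ‖c‖ ^ 2)
    (fun _ => by positivity) hps]
  have hv : ((‖c‖ ^ 2 : ℝ)) ^ (p/2) = ‖c‖ ^ p := by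
    rw [← Real.rpow_natCast (‖c‖) 2, ← Real.rpow_mul habs]
    congr 1
    push_cast
    ring
  rw [Finset.sum_const, Finset.card_univ, Fintype.card_fin, one_smul, hv,
    ← Real.rpow_mul habs, mul_one_div_cancel hp0, Real.rpow_one]

end H3
section H4
variable {p : ℝ}

lemma frob_eq {n : ℕ} (X : Matrix (Fin n) (Fin n) ℂ) :
    ((Xᴴ * X).trace).re = ∑ j, ∑ i, Complex.normSq (X i j) := by
  have hz : ∀ z : ℂ, (star z * z) = ((Complex.normSq z : ℝ) : ℂ) := fun z => by
    rw [Complex.star_def]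
    exact Complex.normSq_eq_conj_mul_self.symm
  simp only [Matrix.trace, Matrix.diag_apply, Matrix.mul_apply, Matrix.conjTranspose_apply,
    hz, Complex.re_sum]
  exact Finset.sum_congr rfl fun j _ => Finset.sum_congr rfl fun i _ => Complex.ofReal_re _

lemma frob_nonneg {n : ℕ} (X : Matrix (Fin n) (Fin n) ℂ) : 0 ≤ ((Xᴴ * X).trace).re := by
  rw [frob_eq]
  exact Finset.sum_nonneg fun j _ => Finset.sum_nonneg fun i _ => Complex.normSq_nonneg _

lemma schattenNorm_le_frob (hp : 1 < p) {n : ℕ} (X : Matrix (Fin n) (Fin n) ℂ) :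
    schattenNorm p X ≤ (n:ℝ) ^ (1/p) * (((Xᴴ * X).trace).re) ^ ((1:ℝ)/2) := by
  have hp0 : (0:ℝ) < p := by linarith
  have hp2 : (0:ℝ) ≤ p/2 := by linarith
  set e : Fin n → ℝ := fun i => (Matrix.isHermitian_conjTranspose_mul_self X).eigenvalues i with hedef
  have he : ∀ i, 0 ≤ e i := fun i => Matrix.eigenvalues_conjTranspose_mul_self_nonneg X i
  set s : ℝ := ((Xᴴ * X).trace).re with hsdef
  have hse : s = ∑ i, e i := by
    rw [hsdef]
    have := sum_eig_pow (Xᴴ * X) (Matrix.isHermitian_conjTranspose_mul_self X) (k := 1) le_rfl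
    simp only [pow_one] at this
    rw [← this]
  have hs0 : 0 ≤ s := by rw [hse]; exact Finset.sum_nonneg fun i _ => he i
  have heis : ∀ i, e i ≤ s := fun i => by
    rw [hse]; exact Finset.single_le_sum (fun j _ => he j) (Finset.mem_univ i)
  rw [schattenNorm_eq_rpow hp]
  have hT : ∑ i, e i ^ (p/2) ≤ (n:ℝ) * s ^ (p/2) := by
    calc ∑ i, e i ^ (p/2) ≤ ∑ _i : Fin n, s ^ (p/2) :=
          Finset.sum_le_sum fun i _ => Real.rpow_le_rpow (he i) (heis i) hp2
      _ = (n:ℝ) * s ^ (p/2) := by simp [mul_comm]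
  calc (∑ i, e i ^ (p/2)) ^ (1/p) ≤ ((n:ℝ) * s ^ (p/2)) ^ (1/p) :=
        Real.rpow_le_rpow (Finset.sum_nonneg fun i _ => Real.rpow_nonneg (he i) _) hT
          (by positivity)
    _ = (n:ℝ) ^ (1/p) * (s ^ (p/2)) ^ (1/p) :=
        Real.mul_rpow (Nat.cast_nonneg n) (Real.rpow_nonneg hs0 _)
    _ = (n:ℝ) ^ (1/p) * s ^ ((1:ℝ)/2) := by
        rw [← Real.rpow_mul hs0, show (p/2) * (1/p) = (1:ℝ)/2 by
          calc (p/2) * (1/p) = (p * (1/p))/2 := by ring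
            _ = (1:ℝ)/2 := by rw [mul_one_div, div_self (ne_of_gt hp0)]]

lemma frob_le_schattenNorm (hp : 1 < p) {n : ℕ} (X : Matrix (Fin n) (Fin n) ℂ) :
    (((Xᴴ * X).trace).re) ^ ((1:ℝ)/2) ≤ (n:ℝ) ^ ((1:ℝ)/2) * schattenNorm p X := by
  have hp0 : (0:ℝ) < p := by linarith
  set e : Fin n → ℝ := fun i => (Matrix.isHermitian_conjTranspose_mul_self X).eigenvalues i with hedef
  have he : ∀ i, 0 ≤ e i := fun i => Matrix.eigenvalues_conjTranspose_mul_self_nonneg X i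
  set T : ℝ := ∑ i, e i ^ (p/2) with hTdef
  have hT0 : 0 ≤ T := Finset.sum_nonneg fun i _ => Real.rpow_nonneg (he i) _
  set s : ℝ := ((Xᴴ * X).trace).re with hsdef
  have hse : s = ∑ i, e i := by
    rw [hsdef]
    have := sum_eig_pow (Xᴴ * X) (Matrix.isHermitian_conjTranspose_mul_self X) (k := 1) le_rfl
    simp only [pow_one] at this
    rw [← this]
  have hs0 : 0 ≤ s := by rw [hse]; exact Finset.sum_nonneg fun i _ => he i
  have heT : ∀ i, e i ≤ T ^ ((2:ℝ)/p) := fun i => by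
    have h1 : e i ^ (p/2) ≤ T :=
      Finset.single_le_sum (fun j _ => Real.rpow_nonneg (he j) _) (Finset.mem_univ i)
    have h2 : (e i ^ (p/2)) ^ ((2:ℝ)/p) ≤ T ^ ((2:ℝ)/p) :=
      Real.rpow_le_rpow (Real.rpow_nonneg (he i) _) h1 (by positivity)
    calc e i = (e i ^ (p/2)) ^ ((2:ℝ)/p) := by
          rw [← Real.rpow_mul (he i)]
          rw [show (p/2) * ((2:ℝ)/p) = 1 by field_simp]
          exact (Real.rpow_one _).symm
      _ ≤ T ^ ((2:ℝ)/p) := h2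
  have hsn : s ≤ (n:ℝ) * T ^ ((2:ℝ)/p) := by
    rw [hse]
    calc ∑ i, e i ≤ ∑ _i : Fin n, T ^ ((2:ℝ)/p) := Finset.sum_le_sum fun i _ => heT i
      _ = (n:ℝ) * T ^ ((2:ℝ)/p) := by simp [mul_comm]
  rw [schattenNorm_eq_rpow hp]
  calc s ^ ((1:ℝ)/2) ≤ ((n:ℝ) * T ^ ((2:ℝ)/p)) ^ ((1:ℝ)/2) :=
        Real.rpow_le_rpow hs0 hsn (by positivity)
    _ = (n:ℝ) ^ ((1:ℝ)/2) * (T ^ ((2:ℝ)/p)) ^ ((1:ℝ)/2) :=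
        Real.mul_rpow (Nat.cast_nonneg n) (Real.rpow_nonneg hT0 _)
    _ = (n:ℝ) ^ ((1:ℝ)/2) * T ^ (1/p) := by
        rw [← Real.rpow_mul hT0, show ((2:ℝ)/p) * (1/2) = 1/p by
          calc ((2:ℝ)/p) * (1/2) = (2 * (1/2))/p := by ring
            _ = 1/p := by norm_num]

lemma frob_schurMul_le {N : ℕ} (φ : Fin N → Fin N → ℂ) (a : Matrix (Fin N) (Fin N) ℂ) :
    (((schurMul φ a)ᴴ * (schurMul φ a)).trace).re
      ≤ (1 + ∑ k, ∑ l, ‖φ k l‖) ^ 2 * ((aᴴ * a).trace).re := by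
  set K : ℝ := 1 + ∑ k, ∑ l, ‖φ k l‖ with hKdef
  have hK1 : (1:ℝ) ≤ K := by
    rw [hKdef]
    have : 0 ≤ ∑ k, ∑ l, ‖φ k l‖ :=
      Finset.sum_nonneg fun k _ => Finset.sum_nonneg fun l _ => norm_nonneg _
    linarith
  have hφK : ∀ k l, ‖φ k l‖ ≤ K := by
    intro k l
    have h1 : ‖φ k l‖ ≤ ∑ j, ‖φ k j‖ :=
      Finset.single_le_sum (f := fun j => ‖φ k j‖)
        (fun j _ => norm_nonneg _) (Finset.mem_univ l)
    have h2 : ∑ j, ‖φ k j‖ ≤ ∑ k, ∑ l, ‖φ k l‖ :=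
      Finset.single_le_sum (f := fun i => ∑ j, ‖φ i j‖)
        (fun i _ => Finset.sum_nonneg fun j _ => norm_nonneg _) (Finset.mem_univ k)
    rw [hKdef]; linarith
  rw [frob_eq, frob_eq, Finset.mul_sum]
  refine Finset.sum_le_sum fun l _ => ?_
  rw [Finset.mul_sum]
  refine Finset.sum_le_sum fun k _ => ?_
  have : Complex.normSq (schurMul φ a k l) = Complex.normSq (φ k l) * Complex.normSq (a k l) := by
    rw [show schurMul φ a k l = φ k l * a k l from rfl, Complex.normSq_mul]
  rw [this]
  have hn : Complex.normSq (φ k l) ≤ K ^ 2 := by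
    rw [← Complex.sq_norm]
    exact pow_le_pow_left₀ (norm_nonneg _) (hφK k l) 2
  exact mul_le_mul_of_nonneg_right hn (Complex.normSq_nonneg _)

lemma exists_schur_bound (hp : 1 < p) {N : ℕ} (φ : Fin N → Fin N → ℂ) :
    ∃ C₀ : ℝ, 0 ≤ C₀ ∧ ∀ a, schattenNorm p (schurMul φ a) ≤ C₀ * schattenNorm p a := by
  set K : ℝ := 1 + ∑ k, ∑ l, ‖φ k l‖ with hKdef
  have hK0 : (0:ℝ) ≤ K := by
    rw [hKdef]
    have : 0 ≤ ∑ k, ∑ l, ‖φ k l‖ :=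
      Finset.sum_nonneg fun k _ => Finset.sum_nonneg fun l _ => norm_nonneg _
    linarith
  refine ⟨(N:ℝ) ^ (1/p) * K * (N:ℝ) ^ ((1:ℝ)/2), by positivity, fun a => ?_⟩
  have h1 := schattenNorm_le_frob hp (schurMul φ a)
  have h2 := frob_le_schattenNorm hp a
  have h3 : ((((schurMul φ a)ᴴ * (schurMul φ a)).trace).re) ^ ((1:ℝ)/2)
      ≤ K * (((aᴴ * a).trace).re) ^ ((1:ℝ)/2) := by
    have hb := frob_schurMul_le φ a
    calc ((((schurMul φ a)ᴴ * (schurMul φ a)).trace).re) ^ ((1:ℝ)/2)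
        ≤ (K ^ 2 * ((aᴴ * a).trace).re) ^ ((1:ℝ)/2) :=
          Real.rpow_le_rpow (frob_nonneg _) hb (by positivity)
      _ = (K ^ 2) ^ ((1:ℝ)/2) * (((aᴴ * a).trace).re) ^ ((1:ℝ)/2) :=
          Real.mul_rpow (by positivity) (frob_nonneg _)
      _ = K * (((aᴴ * a).trace).re) ^ ((1:ℝ)/2) := by
          congr 1
          rw [← Real.rpow_natCast K 2, ← Real.rpow_mul hK0]
          norm_num
  have hp1p : (0:ℝ) ≤ (N:ℝ) ^ (1/p) := by positivity
  calc schattenNorm p (schurMul φ a)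
      ≤ (N:ℝ) ^ (1/p) * ((((schurMul φ a)ᴴ * (schurMul φ a)).trace).re) ^ ((1:ℝ)/2) := h1
    _ ≤ (N:ℝ) ^ (1/p) * (K * (((aᴴ * a).trace).re) ^ ((1:ℝ)/2)) :=
        mul_le_mul_of_nonneg_left h3 hp1p
    _ ≤ (N:ℝ) ^ (1/p) * (K * ((N:ℝ) ^ ((1:ℝ)/2) * schattenNorm p a)) := by
        refine mul_le_mul_of_nonneg_left (mul_le_mul_of_nonneg_left h2 hK0) hp1p
    _ = (N:ℝ) ^ (1/p) * K * (N:ℝ) ^ ((1:ℝ)/2) * schattenNorm p a := by ring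

lemma bound_of_schurOpNorm_le (hp : 1 < p) {N : ℕ} {φ : Fin N → Fin N → ℂ} {C : ℝ}
    (h : schurOpNorm p φ ≤ C) (a : Matrix (Fin N) (Fin N) ℂ) :
    schattenNorm p (schurMul φ a) ≤ C * schattenNorm p a := by
  set S : Set ℝ := {C : ℝ | 0 ≤ C ∧ ∀ a, schattenNorm p (schurMul φ a) ≤ C * schattenNorm p a}
    with hSdef
  obtain ⟨C₀, hC₀0, hC₀⟩ := exists_schur_bound hp φ
  have hSne : S.Nonempty := ⟨C₀, hC₀0, hC₀⟩
  refine le_of_forall_pos_le_add fun ε hε => ?_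
  have hδpos : 0 < ε / (schattenNorm p a + 1) := by
    have := schattenNorm_nonneg (p := p) a
    positivity
  obtain ⟨x, hxS, hxlt⟩ := Real.lt_sInf_add_pos hSne hδpos
  have hxC : x ≤ C + ε / (schattenNorm p a + 1) := by
    have : sInf S ≤ C := h
    linarith
  have hx := hxS.2 a
  have ha0 := schattenNorm_nonneg (p := p) a
  calc schattenNorm p (schurMul φ a) ≤ x * schattenNorm p a := hx
    _ ≤ (C + ε / (schattenNorm p a + 1)) * schattenNorm p a :=
        mul_le_mul_of_nonneg_right hxC ha0
    _ = C * schattenNorm p a + (ε / (schattenNorm p a + 1)) * schattenNorm p a := by ring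
    _ ≤ C * schattenNorm p a + ε := by
        have hle : (ε / (schattenNorm p a + 1)) * schattenNorm p a
            ≤ (ε / (schattenNorm p a + 1)) * (schattenNorm p a + 1) :=
          mul_le_mul_of_nonneg_left (by linarith) hδpos.le
        have heq : (ε / (schattenNorm p a + 1)) * (schattenNorm p a + 1) = ε := by
          field_simp
        linarith

end H4
section H5
variable {p C : ℝ} {f : ℝ → ℝ}

noncomputable def ddSymb (f : ℝ → ℝ) {m : ℕ} (lam : Fin m → ℝ) : Fin m → Fin m → ℂ := fun k l =>
  if k = l then 0 else (((f (lam k) - f (lam l)) / (lam k - lam l) : ℝ) : ℂ)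

lemma f_lips_core (hp : 1 < p)
    (hC : ∀ (n : ℕ) (lam : Fin n → ℝ), StrictMono lam → schurOpNorm p (ddSymb f lam) ≤ C)
    {x y : ℝ} (hxy : x < y) : |f x - f y| ≤ C * |x - y| := by
  have hmono : StrictMono (![x, y] : Fin 2 → ℝ) := by
    intro a b hab
    fin_cases a <;> fin_cases b <;> simp_all
  have hb := bound_of_schurOpNorm_le hp (hC 2 ![x, y] hmono)
    (Matrix.single (0 : Fin 2) (1 : Fin 2) 1)
  have hschur : schurMul (ddSymb f ![x, y]) (Matrix.single (0 : Fin 2) (1 : Fin 2) 1)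
      = Matrix.single (0 : Fin 2) (1 : Fin 2) (ddSymb f ![x, y] 0 1) := by
    ext a b
    fin_cases a <;> fin_cases b <;> simp [schurMul, ddSymb, Matrix.single]
  rw [hschur, schattenNorm_single hp, schattenNorm_single hp] at hb
  have hdd : ddSymb f ![x, y] 0 1 = (((f x - f y) / (x - y) : ℝ) : ℂ) := by
    have h01 : (0 : Fin 2) ≠ 1 := by decide
    simp [ddSymb, h01]
  rw [hdd, Complex.norm_real, Real.norm_eq_abs] at hb
  norm_num at hb
  rw [abs_div] at hb
  have hxy0 : 0 < |x - y| := by rw [abs_sub_pos]; exact ne_of_lt hxy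
  rw [div_le_iff₀ hxy0] at hb
  calc |f x - f y| ≤ C * |x - y| := hb

lemma f_lips (hp : 1 < p)
    (hC : ∀ (n : ℕ) (lam : Fin n → ℝ), StrictMono lam → schurOpNorm p (ddSymb f lam) ≤ C)
    (x y : ℝ) : |f x - f y| ≤ C * |x - y| := by
  rcases lt_trichotomy x y with h | h | h
  · exact f_lips_core hp hC h
  · subst h; simp
  · rw [abs_sub_comm (f x), abs_sub_comm x]
    exact f_lips_core hp hC h

lemma C_nonneg (hp : 1 < p)
    (hC : ∀ (n : ℕ) (lam : Fin n → ℝ), StrictMono lam → schurOpNorm p (ddSymb f lam) ≤ C) :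
    0 ≤ C := by
  have h := f_lips hp hC 0 1
  have h2 : |(0:ℝ) - 1| = 1 := by norm_num
  rw [h2, mul_one] at h
  exact le_trans (abs_nonneg _) h

lemma f_continuous (hp : 1 < p) (hC0 : 0 ≤ C)
    (hlips : ∀ x y : ℝ, |f x - f y| ≤ C * |x - y|) : Continuous f := by
  have : LipschitzWith (Real.toNNReal C) f := by
    refine LipschitzWith.of_dist_le_mul fun x y => ?_
    rw [Real.dist_eq, Real.dist_eq]
    calc |f x - f y| ≤ C * |x - y| := hlips x y
      _ = (Real.toNNReal C : ℝ) * |x - y| := by rw [Real.coe_toNNReal C hC0]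
  exact this.continuous

noncomputable def conjAlgHom {n : ℕ} (U : Matrix.unitaryGroup (Fin n) ℂ) :
    Matrix (Fin n) (Fin n) ℂ →ₐ[ℝ] Matrix (Fin n) (Fin n) ℂ where
  toFun M := (U : Matrix (Fin n) (Fin n) ℂ) * M * ((U : Matrix (Fin n) (Fin n) ℂ))ᴴ
  map_one' := by
    show (U : Matrix (Fin n) (Fin n) ℂ) * 1 * ((U : Matrix (Fin n) (Fin n) ℂ))ᴴ = 1
    rw [Matrix.mul_one, ← Matrix.star_eq_conjTranspose]
    exact Matrix.mem_unitaryGroup_iff.mp U.2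
  map_mul' a b := by
    have hUU : ((U : Matrix (Fin n) (Fin n) ℂ))ᴴ * (U : Matrix (Fin n) (Fin n) ℂ) = 1 := by
      rw [← Matrix.star_eq_conjTranspose]
      exact Matrix.mem_unitaryGroup_iff'.mp U.2
    have hcan : ∀ Z : Matrix (Fin n) (Fin n) ℂ,
        ((U : Matrix (Fin n) (Fin n) ℂ))ᴴ * ((U : Matrix (Fin n) (Fin n) ℂ) * Z) = Z := by
      intro Z
      rw [← Matrix.mul_assoc, hUU, Matrix.one_mul]
    simp only [Matrix.mul_assoc]
    rw [hcan]
  map_zero' := by simp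
  map_add' a b := by
    simp [Matrix.add_mul, Matrix.mul_add]
  commutes' r := by
    have hU1 : (U : Matrix (Fin n) (Fin n) ℂ) * ((U : Matrix (Fin n) (Fin n) ℂ))ᴴ = 1 := by
      rw [← Matrix.star_eq_conjTranspose]
      exact Matrix.mem_unitaryGroup_iff.mp U.2
    simp only [Algebra.algebraMap_eq_smul_one]
    rw [Matrix.mul_smul, Matrix.mul_one, Matrix.smul_mul, hU1]

lemma aeval_conj_diag {n : ℕ} (U : Matrix.unitaryGroup (Fin n) ℂ) (w : Fin n → ℝ)
    (q : Polynomial ℝ) :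
    Polynomial.aeval ((U : Matrix (Fin n) (Fin n) ℂ) * Matrix.diagonal (fun i => (w i : ℂ))
        * ((U : Matrix (Fin n) (Fin n) ℂ))ᴴ) q
      = (U : Matrix (Fin n) (Fin n) ℂ) * Matrix.diagonal (fun i => ((q.eval (w i) : ℝ) : ℂ))
        * ((U : Matrix (Fin n) (Fin n) ℂ))ᴴ := by
  have h1 : (U : Matrix (Fin n) (Fin n) ℂ) * Matrix.diagonal (fun i => (w i : ℂ))
      * ((U : Matrix (Fin n) (Fin n) ℂ))ᴴ
      = conjAlgHom U (Matrix.diagonal (fun i => (w i : ℂ))) := rfl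
  rw [h1, Polynomial.aeval_algHom_apply]
  have h2 : Matrix.diagonal (fun i => (w i : ℂ))
      = Matrix.diagonalAlgHom (n := Fin n) (α := ℂ) ℝ (fun i => (w i : ℂ)) := rfl
  rw [h2, Polynomial.aeval_algHom_apply]
  have h3 : (Polynomial.aeval (fun i => (w i : ℂ))) q
      = fun i => ((q.eval (w i) : ℝ) : ℂ) := by
    funext i
    have h4 : ((fun i => (w i : ℂ)) i) = Polynomial.aeval (w i) (Polynomial.X : Polynomial ℝ) := by
      simp
    calc (Polynomial.aeval (fun i => (w i : ℂ))) q i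
        = Polynomial.aeval ((fun i => (w i : ℂ)) i) q :=
          (Polynomial.aeval_algHom_apply (Pi.evalAlgHom ℝ (fun _ => ℂ) i) _ q).symm
      _ = Polynomial.aeval ((w i : ℂ)) q := rfl
      _ = ((q.eval (w i) : ℝ) : ℂ) := by
          have := Polynomial.aeval_algebraMap_apply_eq_algebraMap_eval (R := ℝ) (A := ℂ) (w i) q
          simpa [Polynomial.coe_aeval_eq_eval] using this
  rw [h3]
  rfl

lemma matFun_decomp {n : ℕ} (f : ℝ → ℝ) (A : Matrix (Fin n) (Fin n) ℂ) (hA : A.IsHermitian)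
    (U : Matrix.unitaryGroup (Fin n) ℂ) (v : Fin n → ℝ)
    (hdec : A = (U : Matrix (Fin n) (Fin n) ℂ) * Matrix.diagonal (fun i => (v i : ℂ)) *
      ((U : Matrix (Fin n) (Fin n) ℂ))ᴴ) :
    matFun f A hA = (U : Matrix (Fin n) (Fin n) ℂ) *
      Matrix.diagonal (fun i => (f (v i) : ℂ)) * ((U : Matrix (Fin n) (Fin n) ℂ))ᴴ := by
  classical
  set s : Finset ℝ :=
    (Finset.image hA.eigenvalues Finset.univ) ∪ (Finset.image v Finset.univ) with hsdef
  set q : Polynomial ℝ := Lagrange.interpolate s id f with hqdef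
  have hq : ∀ x ∈ s, q.eval x = f x := by
    intro x hx
    exact Lagrange.eval_interpolate_at_node f (Set.injOn_id _) hx
  have hsp : A = (hA.eigenvectorUnitary : Matrix (Fin n) (Fin n) ℂ)
      * Matrix.diagonal (fun i => (hA.eigenvalues i : ℂ))
      * ((hA.eigenvectorUnitary : Matrix (Fin n) (Fin n) ℂ))ᴴ := by
    rw [← Matrix.star_eq_conjTranspose]
    exact hA.spectral_theorem
  have h1 : matFun f A hA = Polynomial.aeval A q := by
    conv_rhs => rw [hsp]
    rw [aeval_conj_diag]
    have he : (fun i => ((q.eval (hA.eigenvalues i) : ℝ) : ℂ))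
        = fun i => ((f (hA.eigenvalues i)) : ℂ) := by
      funext i
      rw [hq (hA.eigenvalues i) (Finset.mem_union_left _
        (Finset.mem_image_of_mem _ (Finset.mem_univ i)))]
    rw [he]
    rfl
  have h2 : Polynomial.aeval A q = (U : Matrix (Fin n) (Fin n) ℂ) *
      Matrix.diagonal (fun i => (f (v i) : ℂ)) * ((U : Matrix (Fin n) (Fin n) ℂ))ᴴ := by
    conv_lhs => rw [hdec]
    rw [aeval_conj_diag]
    have he : (fun i => ((q.eval (v i) : ℝ) : ℂ)) = fun i => ((f (v i)) : ℂ) := by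
      funext i
      rw [hq (v i) (Finset.mem_union_right _
        (Finset.mem_image_of_mem _ (Finset.mem_univ i)))]
    rw [he]
  rw [h1, h2]

end H5
section H6
variable {p C : ℝ} {f : ℝ → ℝ}

lemma ite_star_mul {P Q : Prop} [Decidable P] [Decidable Q] :
    star (if P then (1:ℂ) else 0) * (if Q then (1:ℂ) else 0) = if P ∧ Q then 1 else 0 := by
  split_ifs <;> simp_all

set_option maxHeartbeats 1000000 in
lemma main_distinct (hp : 1 < p)
    (hC : ∀ (m : ℕ) (lam : Fin m → ℝ), StrictMono lam → schurOpNorm p (ddSymb f lam) ≤ C)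
    {n : ℕ} (A B : Matrix (Fin n) (Fin n) ℂ) (hA : A.IsHermitian) (hB : B.IsHermitian)
    (U V : Matrix.unitaryGroup (Fin n) ℂ) (lamA lamB : Fin n → ℝ)
    (hAdec : A = (U : Matrix (Fin n) (Fin n) ℂ) * Matrix.diagonal (fun i => (lamA i : ℂ)) *
      ((U : Matrix (Fin n) (Fin n) ℂ))ᴴ)
    (hBdec : B = (V : Matrix (Fin n) (Fin n) ℂ) * Matrix.diagonal (fun i => (lamB i : ℂ)) *
      ((V : Matrix (Fin n) (Fin n) ℂ))ᴴ)
    (hinjA : Function.Injective lamA) (hinjB : Function.Injective lamB) :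
    schattenNorm p (matFun f A hA - matFun f B hB) ≤ C * schattenNorm p (A - B) := by
  classical
  set Uc : Matrix (Fin n) (Fin n) ℂ := (U : Matrix (Fin n) (Fin n) ℂ) with hUcdef
  set Vc : Matrix (Fin n) (Fin n) ℂ := (V : Matrix (Fin n) (Fin n) ℂ) with hVcdef
  have hUU : Ucᴴ * Uc = 1 := by
    rw [hUcdef, ← Matrix.star_eq_conjTranspose]; exact Matrix.mem_unitaryGroup_iff'.mp U.2
  have hUUc : Uc * Ucᴴ = 1 := by
    rw [hUcdef, ← Matrix.star_eq_conjTranspose]; exact Matrix.mem_unitaryGroup_iff.mp U.2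
  have hVV : Vcᴴ * Vc = 1 := by
    rw [hVcdef, ← Matrix.star_eq_conjTranspose]; exact Matrix.mem_unitaryGroup_iff'.mp V.2
  have hVVc : Vc * Vcᴴ = 1 := by
    rw [hVcdef, ← Matrix.star_eq_conjTranspose]; exact Matrix.mem_unitaryGroup_iff.mp V.2
  set E : Finset ℝ := Finset.image lamA Finset.univ ∪ Finset.image lamB Finset.univ with hE
  set lam : Fin E.card → ℝ := fun i => ((E.orderIsoOfFin rfl i : E) : ℝ) with hlamdef
  have hlamMono : StrictMono lam := by
    intro i j hij
    exact Subtype.coe_lt_coe.mpr ((E.orderIsoOfFin rfl).strictMono hij)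
  have hlaminj : Function.Injective lam := hlamMono.injective
  have hmemA : ∀ k, lamA k ∈ E := fun k =>
    Finset.mem_union_left _ (Finset.mem_image_of_mem _ (Finset.mem_univ k))
  have hmemB : ∀ l, lamB l ∈ E := fun l =>
    Finset.mem_union_right _ (Finset.mem_image_of_mem _ (Finset.mem_univ l))
  set σ : Fin n → Fin E.card := fun k => (E.orderIsoOfFin rfl).symm ⟨lamA k, hmemA k⟩ with hσdef
  set τ : Fin n → Fin E.card := fun l => (E.orderIsoOfFin rfl).symm ⟨lamB l, hmemB l⟩ with hτdef
  have hlamσ : ∀ k, lam (σ k) = lamA k := fun k => by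
    rw [hlamdef, hσdef]
    simp only [OrderIso.apply_symm_apply]
  have hlamτ : ∀ l, lam (τ l) = lamB l := fun l => by
    rw [hlamdef, hτdef]
    simp only [OrderIso.apply_symm_apply]
  have hστ : ∀ k l, σ k = τ l ↔ lamA k = lamB l := by
    intro k l
    constructor
    · intro h
      rw [← hlamσ k, ← hlamτ l, h]
    · intro h
      rw [hσdef, hτdef]
      simp only []
      congr 1
      exact Subtype.ext h
  have hσinj : Function.Injective σ := by
    intro k k' h
    apply hinjA
    rw [← hlamσ k, ← hlamσ k', h]
  have hτinj : Function.Injective τ := by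
    intro l l' h
    apply hinjB
    rw [← hlamτ l, ← hlamτ l', h]
  set φ : Fin E.card → Fin E.card → ℂ := ddSymb f lam with hφdef
  set ψ : Fin n → Fin n → ℂ := fun k l => φ (σ k) (τ l) with hψdef
  set W : Matrix (Fin n) (Fin n) ℂ := Ucᴴ * Vc with hWdef
  set X : Matrix (Fin n) (Fin n) ℂ := Ucᴴ * (A - B) * Vc with hXdef
  have hcanU : ∀ Z : Matrix (Fin n) (Fin n) ℂ, Ucᴴ * (Uc * Z) = Z := fun Z => by
    rw [← Matrix.mul_assoc, hUU, Matrix.one_mul]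
  have hcanU2 : ∀ Z : Matrix (Fin n) (Fin n) ℂ, Uc * (Ucᴴ * Z) = Z := fun Z => by
    rw [← Matrix.mul_assoc, hUUc, Matrix.one_mul]
  have hcanV : ∀ Z : Matrix (Fin n) (Fin n) ℂ, Vcᴴ * (Vc * Z) = Z := fun Z => by
    rw [← Matrix.mul_assoc, hVV, Matrix.one_mul]
  -- X in terms of W
  have hX1 : Ucᴴ * A * Vc = Matrix.diagonal (fun k => (lamA k : ℂ)) * W := by
    rw [hAdec, hWdef]
    simp only [Matrix.mul_assoc]
    rw [hcanU]
  have hX2 : Ucᴴ * B * Vc = W * Matrix.diagonal (fun l => (lamB l : ℂ)) := by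
    rw [hBdec, hWdef]
    simp only [Matrix.mul_assoc]
    rw [hVV, Matrix.mul_one]
  have hXentry : X = Matrix.diagonal (fun k => (lamA k : ℂ)) * W
      - W * Matrix.diagonal (fun l => (lamB l : ℂ)) := by
    rw [hXdef, Matrix.mul_sub, Matrix.sub_mul, hX1, hX2]
  -- Schur identity
  have hsm : schurMul ψ X = Matrix.diagonal (fun k => (f (lamA k) : ℂ)) * W
      - W * Matrix.diagonal (fun l => (f (lamB l) : ℂ)) := by
    ext k l
    have hXkl : X k l = ((lamA k : ℂ) - (lamB l : ℂ)) * W k l := by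
      rw [hXentry]
      simp only [Matrix.sub_apply, Matrix.diagonal_mul, Matrix.mul_diagonal]
      ring
    show ψ k l * X k l = _
    simp only [Matrix.sub_apply, Matrix.diagonal_mul, Matrix.mul_diagonal]
    rw [hXkl]
    by_cases hkl : lamA k = lamB l
    · have hs : σ k = τ l := (hστ k l).mpr hkl
      have hφ0 : ψ k l = 0 := by
        rw [hψdef]
        simp only []
        rw [hφdef]
        simp [ddSymb, hs]
      rw [hφ0, hkl]
      ring
    · have hne : σ k ≠ τ l := fun h => hkl ((hστ k l).mp h)
      have hφv : ψ k l = (((f (lamA k) - f (lamB l)) / (lamA k - lamB l) : ℝ) : ℂ) := by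
        rw [hψdef]
        simp only []
        rw [hφdef]
        simp [ddSymb, hne, hlamσ, hlamτ]
      rw [hφv]
      have hsub : ((lamA k : ℂ)) - (lamB l : ℂ) ≠ 0 := by
        rw [← Complex.ofReal_sub]
        exact_mod_cast sub_ne_zero.mpr hkl
      rw [Complex.ofReal_div, Complex.ofReal_sub, Complex.ofReal_sub]
      field_simp
  have hdiff : matFun f A hA - matFun f B hB = Uc * (schurMul ψ X) * Vcᴴ := by
    rw [matFun_decomp f A hA U lamA hAdec, matFun_decomp f B hB V lamB hBdec, hsm]
    rw [Matrix.mul_sub, Matrix.sub_mul]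
    congr 1
    · rw [hWdef]
      simp only [Matrix.mul_assoc]
      rw [← Matrix.mul_assoc Ucᴴ Vc Vcᴴ]
      rw [show Ucᴴ * Vc * Vcᴴ = Ucᴴ by rw [Matrix.mul_assoc, hVVc, Matrix.mul_one]]
    · rw [hWdef]
      simp only [Matrix.mul_assoc]
      rw [hcanU2]
  -- embeddings
  set Vσ : Matrix (Fin E.card) (Fin n) ℂ :=
    Matrix.of (fun i k => if σ k = i then 1 else 0) with hVσdef
  set Vτ : Matrix (Fin E.card) (Fin n) ℂ :=
    Matrix.of (fun i l => if τ l = i then 1 else 0) with hVτdef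
  have hVσiso : Vσᴴ * Vσ = 1 := by
    ext k k'
    simp only [Matrix.mul_apply, Matrix.conjTranspose_apply, hVσdef, Matrix.of_apply]
    simp_rw [ite_star_mul]
    by_cases h : k = k'
    · subst h
      simp only [and_self]
      rw [Finset.sum_ite_eq]
      simp [Matrix.one_apply]
    · have hσne : σ k ≠ σ k' := fun hc => h (hσinj hc)
      rw [Matrix.one_apply_ne h]
      apply Finset.sum_eq_zero
      intro i _
      exact if_neg (fun hc => hσne (hc.1.trans hc.2.symm))
  have hVτiso : Vτᴴ * Vτ = 1 := by
    ext k k'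
    simp only [Matrix.mul_apply, Matrix.conjTranspose_apply, hVτdef, Matrix.of_apply]
    simp_rw [ite_star_mul]
    by_cases h : k = k'
    · subst h
      simp only [and_self]
      rw [Finset.sum_ite_eq]
      simp [Matrix.one_apply]
    · have hτne : τ k ≠ τ k' := fun hc => h (hτinj hc)
      rw [Matrix.one_apply_ne h]
      apply Finset.sum_eq_zero
      intro i _
      exact if_neg (fun hc => hτne (hc.1.trans hc.2.symm))
  have hSchurEmb : schurMul φ (Vσ * X * Vτᴴ) = Vσ * (schurMul ψ X) * Vτᴴ := by
    ext i j
    have expand : ∀ (Z : Matrix (Fin n) (Fin n) ℂ),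
        (Vσ * Z * Vτᴴ) i j = ∑ x, ∑ k,
          (if σ k = i then (1:ℂ) else 0) * Z k x * (if τ x = j then 1 else 0) := by
      intro Z
      rw [Matrix.mul_apply]
      refine Finset.sum_congr rfl fun x _ => ?_
      rw [Matrix.mul_apply, Finset.sum_mul]
      refine Finset.sum_congr rfl fun k _ => ?_
      rw [Matrix.conjTranspose_apply]
      simp only [hVσdef, hVτdef, Matrix.of_apply]
      congr 1
      split_ifs <;> simp
    show φ i j * (Vσ * X * Vτᴴ) i j = (Vσ * (schurMul ψ X) * Vτᴴ) i j
    rw [expand, expand, Finset.mul_sum]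
    refine Finset.sum_congr rfl fun x _ => ?_
    rw [Finset.mul_sum]
    refine Finset.sum_congr rfl fun k _ => ?_
    show φ i j * ((if σ k = i then (1:ℂ) else 0) * X k x * (if τ x = j then 1 else 0))
      = (if σ k = i then (1:ℂ) else 0) * (schurMul ψ X k x) * (if τ x = j then 1 else 0)
    by_cases h1 : σ k = i
    · by_cases h2 : τ x = j
      · subst h1; subst h2
        show _ = _ * (ψ k x * X k x) * _
        rw [hψdef]
        simp only []
        ring
      · simp [h1, h2]
    · simp [h1]
  -- norm chain
  have hCφ := fun a => bound_of_schurOpNorm_le hp (hC E.card lam hlamMono) a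
  have hXnorm : schattenNorm p X = schattenNorm p (A - B) := by
    have hXform : X = Ucᴴ * (A - B) * (Vcᴴ)ᴴ := by
      rw [hXdef, Matrix.conjTranspose_conjTranspose]
    rw [hXform]
    exact schattenNorm_isometry_conj hp Ucᴴ Vcᴴ
      (by rw [Matrix.conjTranspose_conjTranspose]; exact hUUc)
      (by rw [Matrix.conjTranspose_conjTranspose]; exact hVVc) _
  calc schattenNorm p (matFun f A hA - matFun f B hB)
      = schattenNorm p (Uc * (schurMul ψ X) * Vcᴴ) := by rw [hdiff]
    _ = schattenNorm p (schurMul ψ X) := schattenNorm_isometry_conj hp Uc Vc hUU hVV _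
    _ = schattenNorm p (Vσ * (schurMul ψ X) * Vτᴴ) :=
        (schattenNorm_isometry_conj hp Vσ Vτ hVσiso hVτiso _).symm
    _ = schattenNorm p (schurMul φ (Vσ * X * Vτᴴ)) := by rw [hSchurEmb]
    _ ≤ C * schattenNorm p (Vσ * X * Vτᴴ) := hCφ _
    _ = C * schattenNorm p X := by
        rw [schattenNorm_isometry_conj hp Vσ Vτ hVσiso hVτiso]
    _ = C * schattenNorm p (A - B) := by rw [hXnorm]

end H6
section H7
variable {p C : ℝ} {f : ℝ → ℝ}
open Filter

lemma schattenNorm_tendsto (hp : 1 < p) {N : ℕ} (X : ℕ → Matrix (Fin N) (Fin N) ℂ)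
    (X0 : Matrix (Fin N) (Fin N) ℂ)
    (h : Tendsto X atTop (nhds X0)) :
    Tendsto (fun j => schattenNorm p (X j)) atTop (nhds (schattenNorm p X0)) := by
  have h1p : (0:ℝ) < 1/p := by positivity
  have htr : ∀ k : ℕ, 1 ≤ k →
      Tendsto (fun j => ∑ i, (Matrix.isHermitian_conjTranspose_mul_self (X j)).eigenvalues i ^ k)
        atTop (nhds (∑ i, (Matrix.isHermitian_conjTranspose_mul_self X0).eigenvalues i ^ k)) := by
    intro k hk
    have hre : ∀ (Y : Matrix (Fin N) (Fin N) ℂ),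
        ∑ i, (Matrix.isHermitian_conjTranspose_mul_self Y).eigenvalues i ^ k
          = (((Yᴴ * Y) ^ k).trace).re := fun Y =>
      sum_eig_pow _ (Matrix.isHermitian_conjTranspose_mul_self Y) hk
    simp_rw [hre]
    have hcont : Continuous (fun Y : Matrix (Fin N) (Fin N) ℂ => (((Yᴴ * Y) ^ k).trace).re) := by
      apply Complex.continuous_re.comp
      apply Continuous.matrix_trace
      exact ((continuous_id.matrix_conjTranspose).matrix_mul continuous_id).pow k
    exact (hcont.tendsto X0).comp h
  have hsum := powsum_tendsto hp
    (fun j i => (Matrix.isHermitian_conjTranspose_mul_self (X j)).eigenvalues i)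
    (fun i => (Matrix.isHermitian_conjTranspose_mul_self X0).eigenvalues i)
    (fun j i => Matrix.eigenvalues_conjTranspose_mul_self_nonneg _ i)
    (fun i => Matrix.eigenvalues_conjTranspose_mul_self_nonneg _ i) htr
  simp only [schattenNorm_eq_rpow hp]
  have hrpow : ContinuousAt (fun x : ℝ => x ^ (1/p))
      (∑ i, (Matrix.isHermitian_conjTranspose_mul_self X0).eigenvalues i ^ (p/2)) :=
    Real.continuousAt_rpow_const _ _ (Or.inr h1p.le)
  exact (hrpow.tendsto).comp hsum

lemma herm_conj_diag {n : ℕ} (U : Matrix.unitaryGroup (Fin n) ℂ) (v : Fin n → ℝ) :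
    ((U : Matrix (Fin n) (Fin n) ℂ) * Matrix.diagonal (fun i => (v i : ℂ)) *
      ((U : Matrix (Fin n) (Fin n) ℂ))ᴴ).IsHermitian := by
  have hD : (Matrix.diagonal (fun i => (v i : ℂ)))ᴴ = Matrix.diagonal (fun i => (v i : ℂ)) := by
    rw [Matrix.diagonal_conjTranspose]
    have hstar : (star fun i => ((v i : ℂ))) = fun i => ((v i : ℂ)) := by
      funext i
      rw [Pi.star_apply, Complex.star_def]
      exact Complex.conj_ofReal (v i)
    rw [hstar]
  show _ᴴ = _
  rw [Matrix.conjTranspose_mul, Matrix.conjTranspose_mul, Matrix.conjTranspose_conjTranspose,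
    hD, Matrix.mul_assoc]

lemma inj_perturb_finite {n : ℕ} (v : Fin n → ℝ) (c : Fin n → ℝ) (hc : Function.Injective c) :
    {t : ℝ | ¬ Function.Injective (fun k => v k + t * c k)}.Finite := by
  classical
  set g : Fin n × Fin n → Set ℝ := fun q =>
    if q.1 = q.2 then ∅ else {t : ℝ | v q.1 + t * c q.1 = v q.2 + t * c q.2} with hg
  have hsub : {t : ℝ | ¬ Function.Injective (fun k => v k + t * c k)} ⊆ ⋃ q, g q := by
    intro t ht
    simp only [Function.Injective, not_forall, Set.mem_setOf_eq] at ht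
    obtain ⟨k, k', hkk', hne⟩ := ht
    refine Set.mem_iUnion.mpr ⟨(k, k'), ?_⟩
    rw [hg]
    simp only [if_neg hne]
    exact hkk'
  refine Set.Finite.subset (Set.finite_iUnion fun q => ?_) hsub
  by_cases hq : q.1 = q.2
  · rw [hg]; simp [hq]
  · rw [hg]
    simp only [if_neg hq]
    apply Set.Subsingleton.finite
    intro t1 h1 t2 h2
    have hkey : ∀ t : ℝ, v q.1 + t * c q.1 = v q.2 + t * c q.2 →
        t = (v q.2 - v q.1) / (c q.1 - c q.2) := by
      intro t ht
      have hcc : c q.1 - c q.2 ≠ 0 := sub_ne_zero.mpr (fun hcq => hq (hc hcq))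
      field_simp
      linear_combination ht
    rw [hkey t1 h1, hkey t2 h2]

lemma conj_diag_tendsto {n : ℕ} (U : Matrix.unitaryGroup (Fin n) ℂ) (w : ℕ → Fin n → ℝ)
    (w0 : Fin n → ℝ) (h : ∀ i, Tendsto (fun j => w j i) atTop (nhds (w0 i))) :
    Tendsto (fun j => (U : Matrix (Fin n) (Fin n) ℂ) *
        Matrix.diagonal (fun i => (w j i : ℂ)) * ((U : Matrix (Fin n) (Fin n) ℂ))ᴴ)
      atTop (nhds ((U : Matrix (Fin n) (Fin n) ℂ) *
        Matrix.diagonal (fun i => (w0 i : ℂ)) * ((U : Matrix (Fin n) (Fin n) ℂ))ᴴ)) := by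
  have hdiag : Tendsto (fun j => Matrix.diagonal (fun i => (w j i : ℂ)))
      atTop (nhds (Matrix.diagonal (fun i => (w0 i : ℂ)))) := by
    apply tendsto_pi_nhds.mpr
    intro a
    rw [tendsto_pi_nhds]
    intro b
    by_cases hab : a = b
    · subst hab
      simp only [Matrix.diagonal_apply_eq]
      exact (Complex.continuous_ofReal.tendsto _).comp (h a)
    · simp only [Matrix.diagonal_apply_ne _ hab]
      exact tendsto_const_nhds
  exact (tendsto_const_nhds.mul hdiag).mul tendsto_const_nhds

end H7

open Filter in
theorem stmt14 (f : ℝ → ℝ) (p : ℝ) (hp : 1 < p) (C : ℝ)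
    (hC : ∀ (n : ℕ) (lam : Fin n → ℝ), StrictMono lam →
      schurOpNorm p (fun k l => if k = l then 0 else
      (((f (lam k) - f (lam l)) / (lam k - lam l) : ℝ) : ℂ)) ≤ C)
    (n : ℕ) (A B : Matrix (Fin n) (Fin n) ℂ) (hA : A.IsHermitian) (hB : B.IsHermitian) :
    schattenNorm p (matFun f A hA - matFun f B hB) ≤ C * schattenNorm p (A - B) := by
  classical
  have hC' : ∀ (m : ℕ) (lam : Fin m → ℝ), StrictMono lam →
      schurOpNorm p (ddSymb f lam) ≤ C := fun m lam h => hC m lam h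
  have hC0 : 0 ≤ C := C_nonneg hp hC'
  have hlips := f_lips hp hC'
  have hfc : Continuous f := f_continuous hp hC0 hlips
  set U := hA.eigenvectorUnitary with hUdef
  set V := hB.eigenvectorUnitary with hVdef
  set lamA : Fin n → ℝ := hA.eigenvalues with hlamAdef
  set lamB : Fin n → ℝ := hB.eigenvalues with hlamBdef
  have hAdec : A = (U : Matrix (Fin n) (Fin n) ℂ) *
      Matrix.diagonal (fun i => (lamA i : ℂ)) * ((U : Matrix (Fin n) (Fin n) ℂ))ᴴ := by
    rw [← Matrix.star_eq_conjTranspose]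
    exact hA.spectral_theorem
  have hBdec : B = (V : Matrix (Fin n) (Fin n) ℂ) *
      Matrix.diagonal (fun i => (lamB i : ℂ)) * ((V : Matrix (Fin n) (Fin n) ℂ))ᴴ := by
    rw [← Matrix.star_eq_conjTranspose]
    exact hB.spectral_theorem
  set c : Fin n → ℝ := fun k => (k : ℝ) + 1 with hcdef
  set d : Fin n → ℝ := fun l => -((l : ℝ) + 1) with hddef
  have hcinj : Function.Injective c := by
    intro a b hab
    have : (a : ℝ) = (b : ℝ) := by
      rw [hcdef] at hab
      simp only at hab
      linarith
    exact_mod_cast Fin.ext (by exact_mod_cast this)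
  have hdinj : Function.Injective d := by
    intro a b hab
    have : (a : ℝ) = (b : ℝ) := by
      rw [hddef] at hab
      simp only at hab
      linarith
    exact_mod_cast Fin.ext (by exact_mod_cast this)
  have hbadA := inj_perturb_finite lamA c hcinj
  have hbadB := inj_perturb_finite lamB d hdinj
  have hsel : ∀ j : ℕ, ∃ t : ℝ, t ∈ Set.Ioo (0:ℝ) (1/((j:ℝ)+1)) ∧
      Function.Injective (fun k => lamA k + t * c k) ∧
      Function.Injective (fun l => lamB l + t * d l) := by
    intro j
    have hIoo : (Set.Ioo (0:ℝ) (1/((j:ℝ)+1))).Infinite :=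
      Set.Ioo_infinite (by positivity)
    obtain ⟨t, ht⟩ := (hIoo.diff (hbadA.union hbadB)).nonempty
    refine ⟨t, ht.1, ?_, ?_⟩
    · by_contra hcon
      exact ht.2 (Set.mem_union_left _ hcon)
    · by_contra hcon
      exact ht.2 (Set.mem_union_right _ hcon)
  choose T hT1 hT2 hT3 using hsel
  have hTto : Tendsto T atTop (nhds 0) := by
    have hub : Tendsto (fun j : ℕ => 1/((j:ℝ)+1)) atTop (nhds 0) :=
      tendsto_one_div_add_atTop_nhds_zero_nat
    exact tendsto_of_tendsto_of_tendsto_of_le_of_le tendsto_const_nhds hub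
      (fun j => (hT1 j).1.le) (fun j => (hT1 j).2.le)
  set wA : ℕ → Fin n → ℝ := fun j k => lamA k + T j * c k with hwAdef
  set wB : ℕ → Fin n → ℝ := fun j l => lamB l + T j * d l with hwBdef
  set Aj : ℕ → Matrix (Fin n) (Fin n) ℂ := fun j =>
    (U : Matrix (Fin n) (Fin n) ℂ) * Matrix.diagonal (fun k => (wA j k : ℂ)) *
      ((U : Matrix (Fin n) (Fin n) ℂ))ᴴ with hAjdef
  set Bj : ℕ → Matrix (Fin n) (Fin n) ℂ := fun j =>
    (V : Matrix (Fin n) (Fin n) ℂ) * Matrix.diagonal (fun l => (wB j l : ℂ)) *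
      ((V : Matrix (Fin n) (Fin n) ℂ))ᴴ with hBjdef
  have hAjH : ∀ j, (Aj j).IsHermitian := fun j => herm_conj_diag U (wA j)
  have hBjH : ∀ j, (Bj j).IsHermitian := fun j => herm_conj_diag V (wB j)
  have hineq : ∀ j, schattenNorm p (matFun f (Aj j) (hAjH j) - matFun f (Bj j) (hBjH j))
      ≤ C * schattenNorm p (Aj j - Bj j) := fun j =>
    main_distinct hp hC' (Aj j) (Bj j) (hAjH j) (hBjH j) U V (wA j) (wB j) rfl rfl
      (hT2 j) (hT3 j)
  have hMj : ∀ j, matFun f (Aj j) (hAjH j) = (U : Matrix (Fin n) (Fin n) ℂ) *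
      Matrix.diagonal (fun k => (f (wA j k) : ℂ)) * ((U : Matrix (Fin n) (Fin n) ℂ))ᴴ :=
    fun j => matFun_decomp f (Aj j) (hAjH j) U (wA j) rfl
  have hNj : ∀ j, matFun f (Bj j) (hBjH j) = (V : Matrix (Fin n) (Fin n) ℂ) *
      Matrix.diagonal (fun l => (f (wB j l) : ℂ)) * ((V : Matrix (Fin n) (Fin n) ℂ))ᴴ :=
    fun j => matFun_decomp f (Bj j) (hBjH j) V (wB j) rfl
  -- convergence of the arguments
  have hargA : ∀ i, Tendsto (fun j => wA j i) atTop (nhds (lamA i)) := by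
    intro i
    have h1 : Tendsto (fun j => T j * c i) atTop (nhds 0) := by
      simpa using hTto.mul_const (c i)
    have h2 := Tendsto.const_add (lamA i) h1
    simpa using h2
  have hargB : ∀ i, Tendsto (fun j => wB j i) atTop (nhds (lamB i)) := by
    intro i
    have h1 : Tendsto (fun j => T j * d i) atTop (nhds 0) := by
      simpa using hTto.mul_const (d i)
    have h2 := Tendsto.const_add (lamB i) h1
    simpa using h2
  have hfA : ∀ i, Tendsto (fun j => f (wA j i)) atTop (nhds (f (lamA i))) :=
    fun i => (hfc.tendsto _).comp (hargA i)
  have hfB : ∀ i, Tendsto (fun j => f (wB j i)) atTop (nhds (f (lamB i))) :=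
    fun i => (hfc.tendsto _).comp (hargB i)
  -- limit of LHS matrices
  have hlimM : Tendsto (fun j => matFun f (Aj j) (hAjH j) - matFun f (Bj j) (hBjH j))
      atTop (nhds (matFun f A hA - matFun f B hB)) := by
    have h1 := conj_diag_tendsto U (fun j k => f (wA j k)) (fun k => f (lamA k)) hfA
    have h2 := conj_diag_tendsto V (fun j l => f (wB j l)) (fun l => f (lamB l)) hfB
    have h3 := h1.sub h2
    have hM0 : matFun f A hA = (U : Matrix (Fin n) (Fin n) ℂ) *
        Matrix.diagonal (fun k => (f (lamA k) : ℂ)) * ((U : Matrix (Fin n) (Fin n) ℂ))ᴴ :=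
      matFun_decomp f A hA U lamA hAdec
    have hN0 : matFun f B hB = (V : Matrix (Fin n) (Fin n) ℂ) *
        Matrix.diagonal (fun l => (f (lamB l) : ℂ)) * ((V : Matrix (Fin n) (Fin n) ℂ))ᴴ :=
      matFun_decomp f B hB V lamB hBdec
    rw [hM0, hN0]
    refine h3.congr fun j => ?_
    rw [hMj j, hNj j]
  have hlimD : Tendsto (fun j => Aj j - Bj j) atTop (nhds (A - B)) := by
    have h1 := conj_diag_tendsto U wA lamA hargA
    have h2 := conj_diag_tendsto V wB lamB hargB
    have h3 := h1.sub h2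
    rw [← hAdec, ← hBdec] at h3
    exact h3
  have hlhs := schattenNorm_tendsto hp _ _ hlimM
  have hrhs := (schattenNorm_tendsto hp _ _ hlimD).const_mul C
  exact le_of_tendsto_of_tendsto' hlhs hrhs hineq
end
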